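/- Suppose a random sequence (X_1, X_2, …) with 0 ≤ X_1 ≤ X_2 ≤ ⋯ satisfies the stochastic fixed-point equation (μX_1, μX_2, …) =_d (X_{R(1)}, X_{R(2)}, …), where R is an increasing ℕ-valued random walk with mean step μ, independent of (X_j). If G : [0,∞) → [0,∞) is a nondecreasing random process independent of (X_j) with (G(μt))_{t≥0} =_{f.d.d.} (μ G(t))_{t≥0}, then (G(X_1), G(X_2), …) also satisfies the same stochastic fixed-point equation. -/

import Mathlib

open MeasureTheory ProbabilityTheory
open scoped ENNReal Classical

namespace Stmt8Aux

variable {α : Type*} [MeasurableSpace α]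

lemma measurable_comp_countable_range {f : α → ℝ} (hf : Measurable f)
    (hcr : (Set.range f).Countable) (g : ℝ → ℝ) : Measurable fun a => g (f a) := by
  intro B hB
  have h : (fun a => g (f a)) ⁻¹' B = f ⁻¹' (g ⁻¹' B ∩ Set.range f) := by
    ext a
    simp only [Set.mem_preimage, Set.mem_inter_iff, Set.mem_range]
    exact ⟨fun h => ⟨h, a, rfl⟩, fun h => h.1⟩
  rw [h]
  exact hf ((hcr.mono Set.inter_subset_right).measurableSet)

lemma measurable_eval_comp {r : α → ℝ} (hr : Measurable r) (hcr : (Set.range r).Countable) :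
    Measurable (fun p : α × (ℝ → ℝ) => p.2 (r p.1)) := by
  rcases isEmpty_or_nonempty α with h | h
  · exact measurable_of_empty _
  · obtain ⟨u, hu⟩ := hcr.exists_eq_range (Set.range_nonempty r)
    intro B hB
    have h : (fun p : α × (ℝ → ℝ) => p.2 (r p.1)) ⁻¹' B =
        ⋃ n, ((fun p : α × (ℝ → ℝ) => r p.1) ⁻¹' {u n}) ∩ {p | p.2 (u n) ∈ B} := by
      ext p
      simp only [Set.mem_preimage, Set.mem_iUnion, Set.mem_inter_iff, Set.mem_singleton_iff,
        Set.mem_setOf_eq]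
      constructor
      · intro hp
        have hm : r p.1 ∈ Set.range u := by rw [← hu]; exact Set.mem_range_self _
        obtain ⟨n, hn⟩ := hm
        exact ⟨n, hn.symm, by rwa [hn]⟩
      · rintro ⟨n, hn, hB'⟩
        rwa [hn]
    rw [h]
    exact MeasurableSet.iUnion fun n =>
      ((hr.comp measurable_fst) (measurableSet_singleton _)).inter
        (((measurable_pi_apply (u n)).comp measurable_snd) hB)

noncomputable def projIdx (c : ℕ → ℝ) (t : ℝ) : ℕ :=
  if h : ∃ n, c n = t then Nat.find h else 0

lemma projIdx_spec {c : ℕ → ℝ} {t : ℝ} (h : t ∈ Set.range c) : c (projIdx c t) = t := by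
  obtain ⟨n, hn⟩ := h
  rw [projIdx, dif_pos ⟨n, hn⟩]
  exact Nat.find_spec (⟨n, hn⟩ : ∃ n, c n = t)

lemma measurable_projIdx (c : ℕ → ℝ) : Measurable (projIdx c) := by
  apply measurable_to_countable'
  intro k
  have hdecomp : projIdx c ⁻¹' {k} =
      (projIdx c ⁻¹' {k} ∩ Set.range c) ∪ (projIdx c ⁻¹' {k} \ Set.range c) :=
    (Set.inter_union_diff _ _).symm
  rw [hdecomp]
  apply MeasurableSet.union
  · refine (Set.Countable.mono ?_ (Set.countable_singleton (c k))).measurableSet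
    rintro t ⟨ht, hrange⟩
    simp only [Set.mem_preimage, Set.mem_singleton_iff] at ht
    have := projIdx_spec (c := c) hrange
    rw [ht] at this
    simp [← this]
  · have : projIdx c ⁻¹' {k} \ Set.range c = if k = 0 then (Set.range c)ᶜ else ∅ := by
      ext t
      by_cases ht : ∃ n, c n = t
      · have : t ∈ Set.range c := ht
        split_ifs <;> simp [this]
      · have ht' : t ∉ Set.range c := ht
        have : projIdx c t = 0 := by rw [projIdx, dif_neg ht]
        split_ifs with hk
        · simp [hk, this, ht']
        · simp [this, ht', Ne.symm hk]
    rw [this]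
    split_ifs
    · exact (Set.Countable.measurableSet ((Set.countable_range c))).compl
    · exact MeasurableSet.empty



noncomputable def supE (ρ t : ℝ) (g : ℝ → ℝ) : ℝ≥0∞ :=
  ⨆ q : ℚ, if 0 ≤ (q : ℝ) ∧ ρ * q < t then ENNReal.ofReal (g (ρ * q)) else 0

noncomputable def infE (ρ t : ℝ) (g : ℝ → ℝ) : ℝ≥0∞ :=
  ⨅ q : ℚ, if t < ρ * q then ENNReal.ofReal (g (ρ * q)) else ⊤

lemma measurable_supE {ρ : ℝ} {p : α → ℝ} (hp : Measurable p) :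
    Measurable (fun z : α × (ℝ → ℝ) => supE ρ (p z.1) z.2) := by
  apply Measurable.iSup
  intro q
  have hset : MeasurableSet {z : α × (ℝ → ℝ) | 0 ≤ (q : ℝ) ∧ ρ * q < p z.1} := by
    by_cases h : 0 ≤ (q : ℝ)
    · have heq : {z : α × (ℝ → ℝ) | 0 ≤ (q : ℝ) ∧ ρ * q < p z.1} =
          (fun z : α × (ℝ → ℝ) => p z.1) ⁻¹' (Set.Ioi (ρ * q)) := by
        ext z; simp [h]
      rw [heq]
      exact (hp.comp measurable_fst) measurableSet_Ioi
    · have heq : {z : α × (ℝ → ℝ) | 0 ≤ (q : ℝ) ∧ ρ * q < p z.1} = ∅ := by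
        ext z; simp [h]
      rw [heq]; exact MeasurableSet.empty
  exact Measurable.ite hset
    (ENNReal.measurable_ofReal.comp ((measurable_pi_apply (ρ * q)).comp measurable_snd))
    measurable_const

lemma measurable_infE {ρ : ℝ} {p : α → ℝ} (hp : Measurable p) :
    Measurable (fun z : α × (ℝ → ℝ) => infE ρ (p z.1) z.2) := by
  apply Measurable.iInf
  intro q
  have hset : MeasurableSet {z : α × (ℝ → ℝ) | p z.1 < ρ * q} := by
    have heq : {z : α × (ℝ → ℝ) | p z.1 < ρ * q} =
        (fun z : α × (ℝ → ℝ) => p z.1) ⁻¹' (Set.Iio (ρ * q)) := rfl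
    rw [heq]; exact (hp.comp measurable_fst) measurableSet_Iio
  exact Measurable.ite hset
    (ENNReal.measurable_ofReal.comp ((measurable_pi_apply (ρ * q)).comp measurable_snd))
    measurable_const

noncomputable def evAux (c : ℕ → ℝ) (ρ t : ℝ) (g : ℝ → ℝ) : ℝ :=
  if t ∈ Set.range c then g (c (projIdx c t)) else (supE ρ t g).toReal

lemma evAux_of_mem {c : ℕ → ℝ} {t : ℝ} (h : t ∈ Set.range c) (ρ : ℝ) (g : ℝ → ℝ) :
    evAux c ρ t g = g t := by
  rw [evAux, if_pos h, projIdx_spec h]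

lemma evAux_of_not_mem {c : ℕ → ℝ} {t : ℝ} (h : t ∉ Set.range c) (ρ : ℝ) (g : ℝ → ℝ) :
    evAux c ρ t g = (supE ρ t g).toReal := by
  rw [evAux, if_neg h]

lemma measurable_evAux (c : ℕ → ℝ) (ρ : ℝ) {p : α → ℝ} (hp : Measurable p) :
    Measurable (fun z : α × (ℝ → ℝ) => evAux c ρ (p z.1) z.2) := by
  have hset : MeasurableSet {z : α × (ℝ → ℝ) | p z.1 ∈ Set.range c} := by
    have heq : {z : α × (ℝ → ℝ) | p z.1 ∈ Set.range c} =
        (fun z : α × (ℝ → ℝ) => p z.1) ⁻¹' (Set.range c) := rfl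
    rw [heq]
    exact (hp.comp measurable_fst) (Set.countable_range c).measurableSet
  have hr : Measurable (fun a : α => c (projIdx c (p a))) :=
    measurable_from_nat.comp ((measurable_projIdx c).comp hp)
  have hrc : (Set.range (fun a : α => c (projIdx c (p a)))).Countable :=
    (Set.countable_range c).mono (Set.range_subset_iff.mpr fun a => Set.mem_range_self _) |>.mono
      (le_refl _)
  have h1 : Measurable (fun z : α × (ℝ → ℝ) => z.2 (c (projIdx c (p z.1)))) :=
    measurable_eval_comp hr ((Set.countable_range c).mono
      (Set.range_subset_iff.mpr fun a => Set.mem_range_self _))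
  have h2 : Measurable (fun z : α × (ℝ → ℝ) => (supE ρ (p z.1) z.2).toReal) :=
    ENNReal.measurable_toReal.comp (measurable_supE hp)
  have heq : (fun z : α × (ℝ → ℝ) => evAux c ρ (p z.1) z.2) =
      fun z => if p z.1 ∈ Set.range c then z.2 (c (projIdx c (p z.1)))
        else (supE ρ (p z.1) z.2).toReal := by
    funext z; rw [evAux]
  rw [heq]
  exact Measurable.ite hset h1 h2

lemma measurable_evAux_right (c : ℕ → ℝ) (ρ t : ℝ) :
    Measurable (fun g : ℝ → ℝ => evAux c ρ t g) := by
  have := (measurable_evAux (α := ℝ) c ρ measurable_id).comp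
    ((measurable_const (a := t)).prodMk measurable_id)
  exact this

lemma measurable_evAux_left (c : ℕ → ℝ) (ρ : ℝ) (g : ℝ → ℝ) :
    Measurable (fun t : ℝ => evAux c ρ t g) := by
  exact (measurable_evAux (α := ℝ) c ρ measurable_id).comp
    (measurable_id.prodMk measurable_const)


lemma supE_le {ρ t : ℝ} (hρ : 0 < ρ) (ht : 0 ≤ t) {g : ℝ → ℝ}
    (hg : MonotoneOn g (Set.Ici (0 : ℝ))) : supE ρ t g ≤ ENNReal.ofReal (g t) := by
  apply iSup_le
  intro q
  split_ifs with h
  · exact ENNReal.ofReal_le_ofReal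
      (hg (Set.mem_Ici.mpr (mul_nonneg hρ.le h.1)) (Set.mem_Ici.mpr ht) h.2.le)
  · exact zero_le

lemma le_infE {ρ t : ℝ} (hρ : 0 < ρ) (ht : 0 ≤ t) {g : ℝ → ℝ}
    (hg : MonotoneOn g (Set.Ici (0 : ℝ))) : ENNReal.ofReal (g t) ≤ infE ρ t g := by
  apply le_iInf
  intro q
  split_ifs with h
  · exact ENNReal.ofReal_le_ofReal (hg (Set.mem_Ici.mpr ht)
      (Set.mem_Ici.mpr (ht.trans h.le)) h.le)
  · exact le_top

lemma supE_le_infE {ρ t : ℝ} (hρ : 0 < ρ) {g : ℝ → ℝ}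
    (hg : ∀ q q' : ℚ, 0 ≤ (q : ℝ) → (q : ℝ) ≤ (q' : ℝ) → g (ρ * q) ≤ g (ρ * q')) :
    supE ρ t g ≤ infE ρ t g := by
  apply iSup_le
  intro q
  split_ifs with h
  · apply le_iInf
    intro q'
    split_ifs with h'
    · have hqq' : (q : ℝ) ≤ (q' : ℝ) := by
        have := h.2.trans h'
        exact le_of_lt (by
          have := (mul_lt_mul_iff_right₀ hρ).mp this
          exact_mod_cast this)
      exact ENNReal.ofReal_le_ofReal (hg q q' h.1 hqq')
    · exact le_top
  · exact zero_le

lemma infE_le_supE_of_lt {ρ t t' : ℝ} (hρ : 0 < ρ) (ht : 0 ≤ t) (htt' : t < t')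
    (g : ℝ → ℝ) : infE ρ t g ≤ supE ρ t' g := by
  obtain ⟨q, hq1, hq2⟩ := exists_rat_btwn ((div_lt_div_iff_of_pos_right hρ).mpr htt')
  have h1 : t < ρ * q := by
    rw [div_lt_iff₀ hρ] at hq1; linarith [hq1]
  have h2 : ρ * q < t' := by
    rw [lt_div_iff₀ hρ] at hq2; linarith [hq2]
  have h0 : 0 ≤ (q : ℝ) := by nlinarith
  calc infE ρ t g ≤ ENNReal.ofReal (g (ρ * q)) := by
        refine iInf_le_of_le q ?_
        rw [if_pos h1]
      _ ≤ supE ρ t' g := by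
        refine le_iSup_of_le q ?_
        rw [if_pos ⟨h0, h2⟩]

lemma countable_bad {ρ : ℝ} (hρ : 0 < ρ) (g : ℝ → ℝ) :
    {t : ℝ | 0 ≤ t ∧ supE ρ t g < infE ρ t g}.Countable := by
  set s := {t : ℝ | 0 ≤ t ∧ supE ρ t g < infE ρ t g} with hs
  classical
  set f : ℝ → ℚ := fun t =>
    if h : supE ρ t g < infE ρ t g then
      Classical.choose (ENNReal.lt_iff_exists_rat_btwn.mp h) else 0 with hf
  have hfspec : ∀ t ∈ s, supE ρ t g < (Real.toNNReal (f t) : ℝ≥0∞) ∧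
      (Real.toNNReal (f t) : ℝ≥0∞) < infE ρ t g := by
    intro t ht
    simp only [hf]
    rw [dif_pos ht.2]
    obtain ⟨hq0, h1, h2⟩ := Classical.choose_spec (ENNReal.lt_iff_exists_rat_btwn.mp ht.2)
    exact ⟨h1, h2⟩
  apply Set.MapsTo.countable_of_injOn (Set.mapsTo_univ f s) _ Set.countable_univ
  intro t ht t' ht' heq
  by_contra hne
  rcases lt_or_gt_of_ne hne with hlt | hlt
  · have key : (Real.toNNReal (f t) : ℝ≥0∞) < (Real.toNNReal (f t') : ℝ≥0∞) :=
      lt_of_lt_of_le (hfspec t ht).2 <|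
        le_trans (infE_le_supE_of_lt hρ ht.1 hlt g) (hfspec t' ht').1.le
    rw [heq] at key
    exact lt_irrefl _ key
  · have key : (Real.toNNReal (f t') : ℝ≥0∞) < (Real.toNNReal (f t) : ℝ≥0∞) :=
      lt_of_lt_of_le (hfspec t' ht').2 <|
        le_trans (infE_le_supE_of_lt hρ ht'.1 hlt g) (hfspec t ht).1.le
    rw [heq] at key
    exact lt_irrefl _ key


lemma countable_atoms (m : Measure ℝ) [IsProbabilityMeasure m] :
    {x : ℝ | m {x} ≠ 0}.Countable := by
  have h := Measure.countable_meas_pos_of_disjoint_iUnion (μ := m)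
    (As := fun x : ℝ => {x}) (fun x => measurableSet_singleton x)
    (fun x y hxy => by
      simp only [Function.onFun]
      exact Set.disjoint_singleton.mpr hxy)
  convert h using 1
  ext x
  simp [pos_iff_ne_zero]

lemma measurableSet_singleton_pi (z : ℕ → ℝ) : MeasurableSet {z} := by
  have heq : ({z} : Set (ℕ → ℝ)) = ⋂ j, (fun y : ℕ → ℝ => y j) ⁻¹' {z j} := by
    ext y
    simp [funext_iff]
  rw [heq]
  exact MeasurableSet.iInter fun j => (measurable_pi_apply j) (measurableSet_singleton _)

variable {Ω : Type*} [MeasureSpace Ω] [IsProbabilityMeasure (ℙ : Measure Ω)]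

lemma ae_eq_seq_const {f : Ω → ℕ → ℝ} (hf : Measurable f) (z : ℕ → ℝ)
    (h : Measure.map f ℙ = Measure.map (fun _ : Ω => z) ℙ) :
    ∀ᵐ ω ∂(ℙ : Measure Ω), f ω = z := by
  have hz := measurableSet_singleton_pi z
  have h0 : (ℙ : Measure Ω) (f ⁻¹' {z}ᶜ) = 0 := by
    rw [← Measure.map_apply hf hz.compl, h,
      Measure.map_apply measurable_const hz.compl]
    simp
  rw [ae_iff]
  convert h0 using 2
  ext; simp

lemma law_eq_of_fdd {ι : Type*} [Countable ι] (f g : ι → Ω → ℝ)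
    (hf : ∀ i, Measurable (f i)) (hg : ∀ i, Measurable (g i))
    (h : ∀ I : Finset ι, Measure.map (fun ω => fun i : I => f i ω) ℙ
      = Measure.map (fun ω => fun i : I => g i ω) ℙ) :
    Measure.map (fun ω => fun i : ι => f i ω) ℙ
      = Measure.map (fun ω => fun i : ι => g i ω) ℙ := by
  have hmf : Measurable (fun ω => fun i : ι => f i ω) :=
    measurable_pi_lambda _ hf
  have hmg : Measurable (fun ω => fun i : ι => g i ω) :=
    measurable_pi_lambda _ hg
  haveI h1 : IsProbabilityMeasure (Measure.map (fun ω => fun i : ι => f i ω) ℙ) :=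
    Measure.isProbabilityMeasure_map hmf.aemeasurable
  haveI h2 : IsProbabilityMeasure (Measure.map (fun ω => fun i : ι => g i ω) ℙ) :=
    Measure.isProbabilityMeasure_map hmg.aemeasurable
  refine ext_of_generate_finite (measurableCylinders (fun _ : ι => ℝ))
    generateFrom_measurableCylinders.symm isPiSystem_measurableCylinders ?_ (by simp)
  intro t ht
  obtain ⟨I, S, hS, rfl⟩ := (mem_measurableCylinders t).mp ht
  rw [Measure.map_apply hmf (hS.cylinder I), Measure.map_apply hmg (hS.cylinder I)]
  have e1 : (fun ω => fun i : ι => f i ω) ⁻¹' (cylinder I S)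
      = (fun ω => fun i : I => f i ω) ⁻¹' S := rfl
  have e2 : (fun ω => fun i : ι => g i ω) ⁻¹' (cylinder I S)
      = (fun ω => fun i : I => g i ω) ⁻¹' S := rfl
  rw [e1, e2, ← Measure.map_apply (measurable_pi_lambda _ fun i : I => hf i) hS,
    ← Measure.map_apply (measurable_pi_lambda _ fun i : I => hg i) hS, h I]


noncomputable def kap (c : ℕ → ℝ) : ℕ ⊕ ℚ → ℝ :=
  Sum.elim c (fun q => max (q : ℝ) 0)

noncomputable def lam (c : ℕ → ℝ) (t : ℝ) (k : ℕ ⊕ ℚ → ℝ) : ℝ :=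
  if h : ∃ n, c n = t then k (Sum.inl (Nat.find h))
  else (⨆ q : ℚ, if 0 ≤ (q : ℝ) ∧ (q : ℝ) < t then ENNReal.ofReal (k (Sum.inr q)) else 0).toReal

lemma measurable_lam (c : ℕ → ℝ) (t : ℝ) : Measurable (lam c t) := by
  unfold lam
  split_ifs with h
  · exact measurable_pi_apply _
  · refine ENNReal.measurable_toReal.comp (Measurable.iSup fun q => ?_)
    by_cases hq : 0 ≤ (q : ℝ) ∧ (q : ℝ) < t
    · simp only [if_pos hq]
      exact ENNReal.measurable_ofReal.comp (measurable_pi_apply _)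
    · simp only [if_neg hq]
      exact measurable_const

lemma lam_eq_one {c : ℕ → ℝ} {μ : ℝ} (hμ0 : 0 ≤ μ) (t : ℝ) (g : ℝ → ℝ) :
    lam c t (fun i => μ * g (kap c i)) = μ * evAux c 1 t g := by
  unfold lam
  split_ifs with h
  · rw [evAux_of_mem h]
    simp only [kap, Sum.elim_inl]
    rw [Nat.find_spec h]
  · rw [evAux_of_not_mem h]
    have key : (⨆ q : ℚ, if 0 ≤ (q : ℝ) ∧ (q : ℝ) < t then
        ENNReal.ofReal (μ * g (kap c (Sum.inr q))) else 0)
        = ENNReal.ofReal μ * supE 1 t g := by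
      rw [supE, ENNReal.mul_iSup]
      refine iSup_congr fun q => ?_
      by_cases hq : 0 ≤ (q : ℝ) ∧ (q : ℝ) < t
      · rw [if_pos hq, if_pos (by simpa using hq)]
        simp only [kap, Sum.elim_inr]
        rw [max_eq_left hq.1, one_mul, ENNReal.ofReal_mul hμ0]
      · rw [if_neg hq, if_neg (by simpa using hq), mul_zero]
    rw [key, ENNReal.toReal_mul, ENNReal.toReal_ofReal hμ0]

lemma lam_eq_two {c : ℕ → ℝ} {μ : ℝ} (hμ : 0 < μ) (t : ℝ) (g : ℝ → ℝ) :
    lam c t (fun i => g (μ * kap c i)) = evAux (fun n => μ * c n) μ (μ * t) g := by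
  unfold lam
  split_ifs with h
  · have hmem : μ * t ∈ Set.range (fun n => μ * c n) :=
      ⟨Nat.find h, by simpa using congrArg (fun x => μ * x) (Nat.find_spec h)⟩
    rw [evAux_of_mem hmem]
    simp only [kap, Sum.elim_inl]
    exact congrArg (fun x => g (μ * x)) (Nat.find_spec h)
  · have hmem : μ * t ∉ Set.range (fun n => μ * c n) := by
      rintro ⟨n, hn⟩
      exact h ⟨n, mul_left_cancel₀ hμ.ne' hn⟩
    rw [evAux_of_not_mem hmem, supE]
    congr 1
    refine iSup_congr fun q => ?_
    have hcond : (0 ≤ (q : ℝ) ∧ (q : ℝ) < t) ↔ (0 ≤ (q : ℝ) ∧ μ * q < μ * t) := by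
      constructor
      · exact fun hq => ⟨hq.1, (mul_lt_mul_iff_right₀ hμ).mpr hq.2⟩
      · exact fun hq => ⟨hq.1, (mul_lt_mul_iff_right₀ hμ).mp hq.2⟩
    by_cases hq : 0 ≤ (q : ℝ) ∧ (q : ℝ) < t
    · rw [if_pos hq, if_pos (hcond.mp hq)]
      simp only [kap, Sum.elim_inr]
      rw [max_eq_left hq.1]
    · rw [if_neg hq, if_neg (fun hc => hq (hcond.mpr hc))]

variable [IsProbabilityMeasure (ℙ : Measure Ω)]

lemma evAux_ae_eq (G : ℝ → Ω → ℝ) (hGmeas : ∀ t, Measurable (G t))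
    (hGmono : ∀ ω, MonotoneOn (fun t => G t ω) (Set.Ici (0 : ℝ)))
    (hGnonneg : ∀ t ω, 0 ≤ t → 0 ≤ G t ω)
    (c : ℕ → ℝ) {ρ : ℝ} (hρ : 0 < ρ)
    (p : Ω → ℝ) (hpmeas : Measurable p) (hp0 : ∀ ω, 0 ≤ p ω)
    (hindep : IndepFun p (fun ω => fun t : ℝ => G t ω) ℙ)
    (hatoms : ∀ x : ℝ, x ∉ Set.range c → Measure.map p ℙ {x} = 0) :
    ∀ᵐ ω ∂(ℙ : Measure Ω), evAux c ρ (p ω) (fun x => G x ω) = G (p ω) ω := by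
  set T : Ω → (ℝ → ℝ) := fun ω => fun x => G x ω with hT
  have hTmeas : Measurable T := measurable_pi_lambda _ hGmeas
  have hprod : Measure.map (fun ω => (p ω, T ω)) ℙ = (Measure.map p ℙ).prod (Measure.map T ℙ) :=
    (indepFun_iff_map_prod_eq_prod_map_map hpmeas.aemeasurable hTmeas.aemeasurable).mp hindep
  haveI : IsProbabilityMeasure (Measure.map p ℙ) :=
    Measure.isProbabilityMeasure_map hpmeas.aemeasurable
  haveI : IsProbabilityMeasure (Measure.map T ℙ) :=
    Measure.isProbabilityMeasure_map hTmeas.aemeasurable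
  set B : Set (ℝ × (ℝ → ℝ)) :=
    {z | z.1 ∉ Set.range c ∧ supE ρ z.1 z.2 < infE ρ z.1 z.2} with hB
  have hBmeas : MeasurableSet B := by
    apply MeasurableSet.inter
    · exact measurable_fst ((Set.countable_range c).measurableSet.compl)
    · exact measurableSet_lt (α := ℝ≥0∞) (measurable_supE measurable_id) (measurable_infE measurable_id)
  have hB0 : ((Measure.map p ℙ).prod (Measure.map T ℙ)) B = 0 := by
    rw [Measure.prod_apply_symm hBmeas]
    have hM : MeasurableSet {h : ℝ → ℝ | ∀ q q' : ℚ,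
        0 ≤ (q : ℝ) → (q : ℝ) ≤ (q' : ℝ) → h (ρ * q) ≤ h (ρ * q')} := by
      have heq : {h : ℝ → ℝ | ∀ q q' : ℚ, 0 ≤ (q : ℝ) → (q : ℝ) ≤ (q' : ℝ) →
          h (ρ * q) ≤ h (ρ * q')}
          = ⋂ (q : ℚ), ⋂ (q' : ℚ),
            {h : ℝ → ℝ | 0 ≤ (q : ℝ) → (q : ℝ) ≤ (q' : ℝ) → h (ρ * q) ≤ h (ρ * q')} := by
        ext h; simp [Set.mem_iInter]
      rw [heq]
      refine MeasurableSet.iInter fun q => MeasurableSet.iInter fun q' => ?_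
      by_cases hq : 0 ≤ (q : ℝ) ∧ (q : ℝ) ≤ (q' : ℝ)
      · have heq2 : {h : ℝ → ℝ | 0 ≤ (q : ℝ) → (q : ℝ) ≤ (q' : ℝ) → h (ρ * q) ≤ h (ρ * q')}
            = {h : ℝ → ℝ | h (ρ * q) ≤ h (ρ * q')} := by
          ext h; simp [hq.1, hq.2]
        rw [heq2]
        exact measurableSet_le (measurable_pi_apply _) (measurable_pi_apply _)
      · have heq2 : {h : ℝ → ℝ | 0 ≤ (q : ℝ) → (q : ℝ) ≤ (q' : ℝ) → h (ρ * q) ≤ h (ρ * q')}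
            = Set.univ := by
          ext h
          simp only [Set.mem_setOf_eq, Set.mem_univ, iff_true]
          intro h1 h2
          exact absurd ⟨h1, h2⟩ hq
        rw [heq2]
        exact MeasurableSet.univ
    have hMae : ∀ᵐ h ∂(Measure.map T ℙ), ∀ q q' : ℚ,
        0 ≤ (q : ℝ) → (q : ℝ) ≤ (q' : ℝ) → h (ρ * q) ≤ h (ρ * q') := by
      rw [ae_iff]
      have : {h : ℝ → ℝ | ¬ ∀ q q' : ℚ, 0 ≤ (q : ℝ) → (q : ℝ) ≤ (q' : ℝ) →
          h (ρ * q) ≤ h (ρ * q')} = {h : ℝ → ℝ | ∀ q q' : ℚ,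
          0 ≤ (q : ℝ) → (q : ℝ) ≤ (q' : ℝ) → h (ρ * q) ≤ h (ρ * q')}ᶜ := rfl
      rw [this, Measure.map_apply hTmeas hM.compl]
      convert measure_empty (μ := (ℙ : Measure Ω))
      ext ω
      simp only [Set.mem_preimage, Set.mem_compl_iff, Set.mem_setOf_eq, Set.mem_empty_iff_false,
        iff_false, not_not]
      intro q q' hq hqq'
      exact hGmono ω (Set.mem_Ici.mpr (mul_nonneg hρ.le hq))
        (Set.mem_Ici.mpr (mul_nonneg hρ.le (hq.trans hqq')))
        (by exact mul_le_mul_of_nonneg_left hqq' hρ.le)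
    rw [← lintegral_zero (μ := Measure.map T ℙ)]
    apply lintegral_congr_ae
    filter_upwards [hMae] with h hh
    have hsub : (fun x => (x, h)) ⁻¹' B ⊆
        ({x : ℝ | 0 ≤ x ∧ supE ρ x h < infE ρ x h} ∩ (Set.range c)ᶜ) ∪ Set.Iio 0 := by
      intro x hx
      simp only [Set.mem_preimage, hB, Set.mem_setOf_eq] at hx
      by_cases hx0 : 0 ≤ x
      · exact Or.inl ⟨⟨hx0, hx.2⟩, hx.1⟩
      · exact Or.inr (lt_of_not_ge hx0)
    refine measure_mono_null hsub (measure_union_null ?_ ?_)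
    · have hcount : ({x : ℝ | 0 ≤ x ∧ supE ρ x h < infE ρ x h} ∩ (Set.range c)ᶜ).Countable :=
        (countable_bad hρ h).mono Set.inter_subset_left
      rw [← Set.biUnion_of_singleton ({x : ℝ | 0 ≤ x ∧ supE ρ x h < infE ρ x h} ∩ (Set.range c)ᶜ),
        measure_biUnion_null_iff hcount]
      intro x hx
      exact hatoms x hx.2
    · rw [Measure.map_apply hpmeas measurableSet_Iio]
      convert measure_empty (μ := (ℙ : Measure Ω))
      ext ω
      simp [not_lt.mpr (hp0 ω)]
  have hN : (ℙ : Measure Ω) {ω | (p ω, T ω) ∈ B} = 0 := by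
    have : {ω | (p ω, T ω) ∈ B} = (fun ω => (p ω, T ω)) ⁻¹' B := rfl
    rw [this, ← Measure.map_apply (hpmeas.prodMk hTmeas) hBmeas, hprod, hB0]
  have hae : ∀ᵐ ω ∂(ℙ : Measure Ω), (p ω, T ω) ∉ B := by
    rw [ae_iff]
    convert hN using 2
    simp
  filter_upwards [hae] with ω hω
  by_cases hmem : p ω ∈ Set.range c
  · exact evAux_of_mem hmem ρ _
  · rw [evAux_of_not_mem hmem]
    have hsuple : supE ρ (p ω) (fun x => G x ω) ≤ ENNReal.ofReal (G (p ω) ω) :=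
      supE_le hρ (hp0 ω) (hGmono ω)
    have hinfge : ENNReal.ofReal (G (p ω) ω) ≤ infE ρ (p ω) (fun x => G x ω) :=
      le_infE hρ (hp0 ω) (hGmono ω)
    have hnl : ¬ (supE ρ (p ω) (T ω) < infE ρ (p ω) (T ω)) := fun hc => hω ⟨hmem, hc⟩
    have heq : supE ρ (p ω) (fun x => G x ω) = ENNReal.ofReal (G (p ω) ω) := by
      refine le_antisymm hsuple ?_
      have : T ω = fun x => G x ω := rfl
      rw [this] at hnl
      exact hinfge.trans (not_lt.mp hnl)
    rw [heq, ENNReal.toReal_ofReal (hGnonneg _ _ (hp0 ω))]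


omit [IsProbabilityMeasure (ℙ : Measure Ω)] in
lemma measurable_comp_nat {f : ℕ → α → ℝ} (hf : ∀ n, Measurable (f n)) {N : α → ℕ}
    (hN : Measurable N) : Measurable fun a => f (N a) a := by
  have h1 : Measurable (fun z : α × ℕ => f z.2 z.1) :=
    measurable_from_prod_countable_left fun n => hf n
  have h2 : Measurable fun a : α => (a, N a) := measurable_id.prodMk hN
  exact h1.comp h2

end Stmt8Aux


open MeasureTheory ProbabilityTheory

/-- If the nondecreasing nonnegative random sequence `(X j)_{j ≥ 1}` satisfies the
stochastic fixed-point equation `(μ X_1, μ X_2, …) =_d (X_{R(1)}, X_{R(2)}, …)` with `R` an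
increasing `ℕ`-valued random walk of mean step `μ` independent of `X`, and `G` is a
nondecreasing random process on `[0,∞)`, independent of `(X, R)`, with
`(G(μ t))_t =_{f.d.d.} (μ G(t))_t`, then `(G(X_1), G(X_2), …)` satisfies the same equation.
(Indices: `X j` for `j ≥ 1` is the `j`-th term; `R k = ξ 0 + ⋯ + ξ (k-1)`.) -/
theorem stmt8 {Ω : Type*} [MeasureSpace Ω] [IsProbabilityMeasure (ℙ : Measure Ω)]
    (μ : ℝ) (X : ℕ → Ω → ℝ) (hXmeas : ∀ j, Measurable (X j))
    (hXnonneg : ∀ j ω, 0 ≤ X j ω) (hXmono : ∀ ω, Monotone (fun j => X j ω))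
    (ξ : ℕ → Ω → ℕ) (hξmeas : ∀ i, Measurable (ξ i)) (hξpos : ∀ i ω, 1 ≤ ξ i ω)
    (hξiid : iIndepFun ξ ℙ)
    (hξid : ∀ i, IdentDistrib (ξ i) (ξ 0) ℙ ℙ)
    (hmean : μ = ∫ ω, (ξ 0 ω : ℝ))
    (R : ℕ → Ω → ℕ) (hR : ∀ k ω, R k ω = ∑ i ∈ Finset.range k, ξ i ω)
    (hXRindep : IndepFun (fun ω => fun j : ℕ => X j ω) (fun ω => fun i : ℕ => ξ i ω) ℙ)
    (hSFPE : Measure.map (fun ω => fun j : ℕ => μ * X (j + 1) ω) ℙ =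
      Measure.map (fun ω => fun j : ℕ => X (R (j + 1) ω) ω) ℙ)
    (G : ℝ → Ω → ℝ) (hGmeas : ∀ t, Measurable (G t))
    (hGmono : ∀ ω, MonotoneOn (fun t => G t ω) (Set.Ici (0 : ℝ)))
    (hGnonneg : ∀ t ω, 0 ≤ t → 0 ≤ G t ω)
    (hGindep : IndepFun (fun ω => (fun j : ℕ => X j ω, fun i : ℕ => ξ i ω))
      (fun ω => fun t : ℝ => G t ω) ℙ)
    (hGss : ∀ (m : ℕ) (t : Fin m → ℝ),
      Measure.map (fun ω => fun i : Fin m => G (μ * t i) ω) ℙ =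
        Measure.map (fun ω => fun i : Fin m => μ * G (t i) ω) ℙ) :
    Measure.map (fun ω => fun j : ℕ => μ * G (X (j + 1) ω) ω) ℙ =
      Measure.map (fun ω => fun j : ℕ => G (X (R (j + 1) ω) ω) ω) ℙ := by
  classical
  open Stmt8Aux in
  have hμ0 : 0 ≤ μ := by
    rw [hmean]
    exact integral_nonneg fun ω => by positivity
  -- measurability of the composed inner process
  have hRmeas : ∀ k, Measurable (R k) := by
    intro k
    have : R k = fun ω => ∑ i ∈ Finset.range k, ξ i ω := funext fun ω => hR k ω
    rw [this]
    exact Finset.measurable_sum _ fun i _ => hξmeas i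
  have hXRmeas : ∀ j, Measurable fun ω => X (R (j + 1) ω) ω := fun j =>
    Stmt8Aux.measurable_comp_nat hXmeas (hRmeas (j + 1))
  rcases eq_or_lt_of_le hμ0 with hμz | hμpos
  · -- degenerate case μ = 0
    have hμ : μ = 0 := hμz.symm
    have hseqR : Measurable fun ω => fun j : ℕ => X (R (j + 1) ω) ω :=
      measurable_pi_lambda _ fun j => hXRmeas j
    have h0seq : ∀ᵐ ω ∂(ℙ : Measure Ω), (fun j : ℕ => X (R (j + 1) ω) ω) = fun _ => 0 := by
      apply Stmt8Aux.ae_eq_seq_const hseqR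
      rw [← hSFPE]
      have : (fun ω => fun j : ℕ => μ * X (j + 1) ω) = fun _ => fun _ : ℕ => (0 : ℝ) := by
        funext ω j; rw [hμ, zero_mul]
      rw [this]
    have hG0 : ∀ᵐ ω ∂(ℙ : Measure Ω), G 0 ω = 0 := by
      have h1 := hGss 1 (fun _ => 0)
      have h2 := congrArg (Measure.map (fun y : Fin 1 → ℝ => y 0)) h1
      rw [Measure.map_map (measurable_pi_apply 0)
          (measurable_pi_lambda _ fun _ => hGmeas _),
        Measure.map_map (measurable_pi_apply 0)
          (measurable_pi_lambda _ fun _ => (hGmeas _).const_mul μ)] at h2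
      have h3 : Measure.map (G 0) ℙ = Measure.map (fun _ : Ω => (0 : ℝ)) ℙ := by
        have e1 : ((fun y : Fin 1 → ℝ => y 0) ∘ fun ω => fun _ : Fin 1 => G (μ * 0) ω)
            = G 0 := by funext ω; simp [hμ]
        have e2 : ((fun y : Fin 1 → ℝ => y 0) ∘ fun ω => fun _ : Fin 1 => μ * G 0 ω)
            = fun _ : Ω => (0 : ℝ) := by funext ω; simp [hμ]
        rw [e1, e2] at h2
        exact h2
      have h0 : (ℙ : Measure Ω) ((G 0) ⁻¹' {(0:ℝ)}ᶜ) = 0 := by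
        rw [← Measure.map_apply (hGmeas 0) (measurableSet_singleton (0:ℝ)).compl, h3,
          Measure.map_apply measurable_const (measurableSet_singleton (0:ℝ)).compl]
        simp
      rw [ae_iff]
      convert h0 using 2
      ext; simp
    have hLHS : (fun ω => fun j : ℕ => μ * G (X (j + 1) ω) ω)
        = fun _ => fun _ : ℕ => (0 : ℝ) := by
      funext ω j; rw [hμ, zero_mul]
    rw [hLHS]
    symm
    apply Measure.map_congr
    filter_upwards [h0seq, hG0] with ω h1 h2
    funext j
    have : X (R (j + 1) ω) ω = 0 := congrFun h1 j
    rw [this, h2]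
  · -- main case 0 < μ
    set S : Ω → (ℕ → ℝ) × (ℕ → ℕ) := fun ω => (fun j => X j ω, fun i => ξ i ω) with hSdef
    set T : Ω → (ℝ → ℝ) := fun ω => fun t => G t ω with hTdef
    have hSmeas : Measurable S :=
      (measurable_pi_lambda _ hXmeas).prodMk (measurable_pi_lambda _ hξmeas)
    have hTmeas : Measurable T := measurable_pi_lambda _ hGmeas
    haveI : ∀ j, IsProbabilityMeasure (Measure.map (X j) ℙ) := fun j =>
      Measure.isProbabilityMeasure_map (hXmeas j).aemeasurable
    -- the countable set containing 0 and all atoms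
    have hAc : (Set.insert (0:ℝ) (⋃ j : ℕ, {x : ℝ | Measure.map (X j) ℙ {x} ≠ 0})).Countable :=
      (Set.countable_iUnion fun j => Stmt8Aux.countable_atoms (Measure.map (X j) ℙ)).insert 0
    obtain ⟨c, hc⟩ := hAc.exists_eq_range (Set.insert_nonempty _ _)
    have hatoms1 : ∀ (j : ℕ) (x : ℝ), x ∉ Set.range c → Measure.map (X j) ℙ {x} = 0 := by
      intro j x hx
      by_contra h
      exact hx (hc ▸ Set.mem_insert_of_mem _ (Set.mem_iUnion.mpr ⟨j, h⟩))
    set c' : ℕ → ℝ := fun n => μ * c n with hc'def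
    -- point maps on the product space
    have hp1meas : ∀ j : ℕ, Measurable fun s : (ℕ → ℝ) × (ℕ → ℕ) => s.1 (j + 1) := fun j =>
      (measurable_pi_apply (j + 1)).comp measurable_fst
    have hp2meas : ∀ j : ℕ, Measurable fun s : (ℕ → ℝ) × (ℕ → ℕ) =>
        s.1 (∑ i ∈ Finset.range (j + 1), s.2 i) := by
      intro j
      apply Stmt8Aux.measurable_comp_nat (f := fun n (s : (ℕ → ℝ) × (ℕ → ℕ)) => s.1 n)
        (fun n => (measurable_pi_apply n).comp measurable_fst)
      exact Finset.measurable_sum _ fun i _ => (measurable_pi_apply i).comp measurable_snd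
    -- the three transfer maps
    set Ψ₁ : ((ℕ → ℝ) × (ℕ → ℕ)) × (ℝ → ℝ) → ℕ → ℝ :=
      fun z => fun j => μ * Stmt8Aux.evAux c 1 (z.1.1 (j + 1)) z.2 with hΨ₁def
    set Ψ₀ : ((ℕ → ℝ) × (ℕ → ℕ)) × (ℝ → ℝ) → ℕ → ℝ :=
      fun z => fun j => Stmt8Aux.evAux c' μ (μ * z.1.1 (j + 1)) z.2 with hΨ₀def
    set Ψ₂ : ((ℕ → ℝ) × (ℕ → ℕ)) × (ℝ → ℝ) → ℕ → ℝ :=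
      fun z => fun j => Stmt8Aux.evAux c' μ (z.1.1 (∑ i ∈ Finset.range (j + 1), z.1.2 i)) z.2
      with hΨ₂def
    have hΨ₁meas : Measurable Ψ₁ := measurable_pi_lambda _ fun j =>
      ((Stmt8Aux.measurable_evAux c 1 (hp1meas j))).const_mul μ
    have hΨ₀meas : Measurable Ψ₀ := measurable_pi_lambda _ fun j =>
      Stmt8Aux.measurable_evAux c' μ ((hp1meas j).const_mul μ)
    have hΨ₂meas : Measurable Ψ₂ := measurable_pi_lambda _ fun j =>
      Stmt8Aux.measurable_evAux c' μ (hp2meas j)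
    -- product structure from independence
    have hpairmeas : Measurable fun ω => (S ω, T ω) := hSmeas.prodMk hTmeas
    have hprod : Measure.map (fun ω => (S ω, T ω)) ℙ
        = (Measure.map S ℙ).prod (Measure.map T ℙ) :=
      (indepFun_iff_map_prod_eq_prod_map_map hSmeas.aemeasurable hTmeas.aemeasurable).mp hGindep
    haveI : IsProbabilityMeasure (Measure.map S ℙ) :=
      Measure.isProbabilityMeasure_map hSmeas.aemeasurable
    haveI : IsProbabilityMeasure (Measure.map T ℙ) :=
      Measure.isProbabilityMeasure_map hTmeas.aemeasurable
    -- a.e. agreement for the left side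
    have hAE1 : ∀ᵐ ω ∂(ℙ : Measure Ω), ∀ j : ℕ,
        Stmt8Aux.evAux c 1 (X (j + 1) ω) (fun x => G x ω) = G (X (j + 1) ω) ω := by
      rw [ae_all_iff]
      intro j
      apply Stmt8Aux.evAux_ae_eq G hGmeas hGmono hGnonneg c one_pos (X (j + 1)) (hXmeas (j + 1))
        (fun ω => hXnonneg (j + 1) ω)
      · exact hGindep.comp (hp1meas j) measurable_id
      · exact hatoms1 (j + 1)
    -- a.e. agreement for the right side
    have hlawcoord : ∀ j : ℕ, Measure.map (fun ω => X (R (j + 1) ω) ω) ℙ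
        = Measure.map (fun ω => μ * X (j + 1) ω) ℙ := by
      intro j
      have h2 := congrArg (Measure.map (fun y : ℕ → ℝ => y j)) hSFPE
      rw [Measure.map_map (measurable_pi_apply j)
          (measurable_pi_lambda _ fun i => (hXmeas (i + 1)).const_mul μ),
        Measure.map_map (measurable_pi_apply j)
          (measurable_pi_lambda _ fun i => hXRmeas i)] at h2
      exact h2.symm
    have hatoms2 : ∀ (j : ℕ) (x : ℝ), x ∉ Set.range c' →
        Measure.map (fun ω => X (R (j + 1) ω) ω) ℙ {x} = 0 := by
      intro j x hx
      rw [hlawcoord j]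
      have hxdiv : x / μ ∉ Set.range c := by
        rintro ⟨n, hn⟩
        refine hx ⟨n, ?_⟩
        show μ * c n = x
        rw [hn, mul_div_cancel₀ _ hμpos.ne']
      have hset : (fun ω => μ * X (j + 1) ω) ⁻¹' {x} = X (j + 1) ⁻¹' {x / μ} := by
        ext ω
        simp only [Set.mem_preimage, Set.mem_singleton_iff]
        rw [eq_div_iff hμpos.ne', mul_comm]
      rw [Measure.map_apply ((hXmeas (j + 1)).const_mul μ) (measurableSet_singleton x), hset,
        ← Measure.map_apply (hXmeas (j + 1)) (measurableSet_singleton _)]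
      exact hatoms1 (j + 1) _ hxdiv
    have hAE2 : ∀ᵐ ω ∂(ℙ : Measure Ω), ∀ j : ℕ,
        Stmt8Aux.evAux c' μ (X (R (j + 1) ω) ω) (fun x => G x ω) = G (X (R (j + 1) ω) ω) ω := by
      rw [ae_all_iff]
      intro j
      apply Stmt8Aux.evAux_ae_eq G hGmeas hGmono hGnonneg c' hμpos
        (fun ω => X (R (j + 1) ω) ω) (hXRmeas j) (fun ω => hXnonneg _ ω)
      · have heq : (fun ω => X (R (j + 1) ω) ω)
            = (fun s : (ℕ → ℝ) × (ℕ → ℕ) => s.1 (∑ i ∈ Finset.range (j + 1), s.2 i)) ∘ S := by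
          funext ω
          show X (R (j + 1) ω) ω = X (∑ i ∈ Finset.range (j + 1), ξ i ω) ω
          exact congrArg (fun n => X n ω) (hR (j + 1) ω)
        rw [heq]
        exact hGindep.comp (hp2meas j) measurable_id
      · exact hatoms2 j
    -- Step A : self-similarity of G transfers
    have lawP : Measure.map (fun ω => fun i : ℕ ⊕ ℚ => μ * G (Stmt8Aux.kap c i) ω) ℙ
        = Measure.map (fun ω => fun i : ℕ ⊕ ℚ => G (μ * Stmt8Aux.kap c i) ω) ℙ := by
      apply Stmt8Aux.law_eq_of_fdd
        (f := fun (i : ℕ ⊕ ℚ) ω => μ * G (Stmt8Aux.kap c i) ω)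
        (g := fun (i : ℕ ⊕ ℚ) ω => G (μ * Stmt8Aux.kap c i) ω)
        (fun i => (hGmeas _).const_mul μ) (fun i => hGmeas _)
      intro I
      have h := hGss I.card fun k => Stmt8Aux.kap c (I.equivFin.symm k)
      have hrI : Measurable fun (v : Fin I.card → ℝ) (i : I) => v (I.equivFin i) :=
        measurable_pi_lambda _ fun i => measurable_pi_apply _
      have h2 := congrArg (Measure.map fun (v : Fin I.card → ℝ) (i : I) => v (I.equivFin i)) h
      rw [Measure.map_map hrI (measurable_pi_lambda _ fun k => hGmeas _),
        Measure.map_map hrI (measurable_pi_lambda _ fun k => (hGmeas _).const_mul μ)] at h2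
      have e1 : ((fun (v : Fin I.card → ℝ) (i : I) => v (I.equivFin i)) ∘
            fun ω => fun k : Fin I.card => G (μ * Stmt8Aux.kap c (I.equivFin.symm k)) ω)
          = fun ω => fun i : I => G (μ * Stmt8Aux.kap c i) ω := by
        funext ω i
        simp [Equiv.symm_apply_apply]
      have e2 : ((fun (v : Fin I.card → ℝ) (i : I) => v (I.equivFin i)) ∘
            fun ω => fun k : Fin I.card => μ * G (Stmt8Aux.kap c (I.equivFin.symm k)) ω)
          = fun ω => fun i : I => μ * G (Stmt8Aux.kap c i) ω := by
        funext ω i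
        simp [Equiv.symm_apply_apply]
      rw [e1, e2] at h2
      exact h2.symm
    have stepA : Measure.map Ψ₁ ((Measure.map S ℙ).prod (Measure.map T ℙ))
        = Measure.map Ψ₀ ((Measure.map S ℙ).prod (Measure.map T ℙ)) := by
      ext A hA
      rw [Measure.map_apply hΨ₁meas hA, Measure.map_apply hΨ₀meas hA,
        Measure.prod_apply (hΨ₁meas hA), Measure.prod_apply (hΨ₀meas hA)]
      apply lintegral_congr
      intro s
      set Γ : ((ℕ ⊕ ℚ) → ℝ) → ℕ → ℝ := fun k j => Stmt8Aux.lam c (s.1 (j + 1)) k with hΓdef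
      have hΓmeas : Measurable Γ := measurable_pi_lambda _ fun j => Stmt8Aux.measurable_lam c _
      have key1 : ∀ ω, Γ (fun i => μ * G (Stmt8Aux.kap c i) ω) = Ψ₁ (s, T ω) := by
        intro ω
        funext j
        exact Stmt8Aux.lam_eq_one hμ0 (s.1 (j + 1)) (fun x => G x ω)
      have key2 : ∀ ω, Γ (fun i => G (μ * Stmt8Aux.kap c i) ω) = Ψ₀ (s, T ω) := by
        intro ω
        funext j
        exact Stmt8Aux.lam_eq_two hμpos (s.1 (j + 1)) (fun x => G x ω)
      have hs1 : MeasurableSet (Prod.mk s ⁻¹' (Ψ₁ ⁻¹' A)) :=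
        measurable_prodMk_left (hΨ₁meas hA)
      have hs0 : MeasurableSet (Prod.mk s ⁻¹' (Ψ₀ ⁻¹' A)) :=
        measurable_prodMk_left (hΨ₀meas hA)
      rw [Measure.map_apply hTmeas hs1, Measure.map_apply hTmeas hs0]
      have hset1 : T ⁻¹' (Prod.mk s ⁻¹' (Ψ₁ ⁻¹' A))
          = (fun ω => fun i : ℕ ⊕ ℚ => μ * G (Stmt8Aux.kap c i) ω) ⁻¹' (Γ ⁻¹' A) := by
        ext ω
        simp only [Set.mem_preimage]
        rw [key1 ω]
      have hset0 : T ⁻¹' (Prod.mk s ⁻¹' (Ψ₀ ⁻¹' A))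
          = (fun ω => fun i : ℕ ⊕ ℚ => G (μ * Stmt8Aux.kap c i) ω) ⁻¹' (Γ ⁻¹' A) := by
        ext ω
        simp only [Set.mem_preimage]
        rw [key2 ω]
      rw [hset1, hset0,
        ← Measure.map_apply (measurable_pi_lambda _ fun i => (hGmeas _).const_mul μ)
          (hΓmeas hA),
        ← Measure.map_apply (measurable_pi_lambda _ fun i => hGmeas _) (hΓmeas hA),
        lawP]
    -- Step B : the SFPE for X transfers
    have hy₀meas : Measurable fun s : (ℕ → ℝ) × (ℕ → ℕ) => fun j : ℕ => μ * s.1 (j + 1) :=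
      measurable_pi_lambda _ fun j => (hp1meas j).const_mul μ
    have hy₂meas : Measurable fun s : (ℕ → ℝ) × (ℕ → ℕ) =>
        fun j : ℕ => s.1 (∑ i ∈ Finset.range (j + 1), s.2 i) :=
      measurable_pi_lambda _ fun j => hp2meas j
    have lawQ : Measure.map (fun s : (ℕ → ℝ) × (ℕ → ℕ) => fun j : ℕ => μ * s.1 (j + 1))
          (Measure.map S ℙ)
        = Measure.map (fun s : (ℕ → ℝ) × (ℕ → ℕ) =>
            fun j : ℕ => s.1 (∑ i ∈ Finset.range (j + 1), s.2 i)) (Measure.map S ℙ) := by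
      rw [Measure.map_map hy₀meas hSmeas, Measure.map_map hy₂meas hSmeas]
      have e1 : ((fun s : (ℕ → ℝ) × (ℕ → ℕ) => fun j : ℕ => μ * s.1 (j + 1)) ∘ S)
          = fun ω => fun j : ℕ => μ * X (j + 1) ω := rfl
      have e2 : ((fun s : (ℕ → ℝ) × (ℕ → ℕ) =>
            fun j : ℕ => s.1 (∑ i ∈ Finset.range (j + 1), s.2 i)) ∘ S)
          = fun ω => fun j : ℕ => X (R (j + 1) ω) ω := by
        funext ω
        funext j
        exact (congrArg (fun n => X n ω) (hR (j + 1) ω)).symm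
      rw [e1, e2, hSFPE]
    have stepB : Measure.map Ψ₀ ((Measure.map S ℙ).prod (Measure.map T ℙ))
        = Measure.map Ψ₂ ((Measure.map S ℙ).prod (Measure.map T ℙ)) := by
      ext A hA
      rw [Measure.map_apply hΨ₀meas hA, Measure.map_apply hΨ₂meas hA,
        Measure.prod_apply_symm (hΨ₀meas hA), Measure.prod_apply_symm (hΨ₂meas hA)]
      apply lintegral_congr
      intro h
      set Fh : (ℕ → ℝ) → ℕ → ℝ := fun y j => Stmt8Aux.evAux c' μ (y j) h with hFhdef
      have hFhmeas : Measurable Fh := measurable_pi_lambda _ fun j =>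
        (Stmt8Aux.measurable_evAux_left c' μ h).comp (measurable_pi_apply j)
      have hset0 : ((fun s : (ℕ → ℝ) × (ℕ → ℕ) => (s, h)) ⁻¹' (Ψ₀ ⁻¹' A))
          = (fun s : (ℕ → ℝ) × (ℕ → ℕ) => fun j : ℕ => μ * s.1 (j + 1)) ⁻¹' (Fh ⁻¹' A) := rfl
      have hset2 : ((fun s : (ℕ → ℝ) × (ℕ → ℕ) => (s, h)) ⁻¹' (Ψ₂ ⁻¹' A))
          = (fun s : (ℕ → ℝ) × (ℕ → ℕ) =>
              fun j : ℕ => s.1 (∑ i ∈ Finset.range (j + 1), s.2 i)) ⁻¹' (Fh ⁻¹' A) := rfl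
      rw [hset0, hset2, ← Measure.map_apply hy₀meas (hFhmeas hA),
        ← Measure.map_apply hy₂meas (hFhmeas hA), lawQ]
    -- assemble the chain
    have eqL : Measure.map (fun ω => fun j : ℕ => μ * G (X (j + 1) ω) ω) ℙ
        = Measure.map Ψ₁ ((Measure.map S ℙ).prod (Measure.map T ℙ)) := by
      rw [← hprod, Measure.map_map hΨ₁meas hpairmeas]
      apply Measure.map_congr
      filter_upwards [hAE1] with ω hω
      funext j
      show μ * G (X (j + 1) ω) ω = μ * Stmt8Aux.evAux c 1 (X (j + 1) ω) (T ω)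
      exact (congrArg (fun y => μ * y) (hω j)).symm
    have eqR : Measure.map (fun ω => fun j : ℕ => G (X (R (j + 1) ω) ω) ω) ℙ
        = Measure.map Ψ₂ ((Measure.map S ℙ).prod (Measure.map T ℙ)) := by
      rw [← hprod, Measure.map_map hΨ₂meas hpairmeas]
      apply Measure.map_congr
      filter_upwards [hAE2] with ω hω
      funext j
      have hRe : R (j + 1) ω = ∑ i ∈ Finset.range (j + 1), ξ i ω := hR (j + 1) ω
      show G (X (R (j + 1) ω) ω) ω
        = Stmt8Aux.evAux c' μ (X (∑ i ∈ Finset.range (j + 1), ξ i ω) ω) (T ω)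
      rw [← hRe]
      exact (hω j).symm
    rw [eqL, eqR, stepA, stepB]
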